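/- For the function J(η) with positive entries η_i, the Schur–Ostrowski condition holds: for all indices i, j, (η_i − η_j)(∂J/∂η_i − ∂J/∂η_j) ≥ 0. In particular, for J̃(η_i, η_j; x) = (x+η_i)^{-1/2}(x+η_j)^{-1/2} with x > 0, one has (η_i − η_j)(∂J̃/∂η_i − ∂J̃/∂η_j) = (η_i − η_j)² / (2(x+η_i)^{3/2}(x+η_j)^{3/2}) ≥ 0. -/

import Mathlib

open MeasureTheory Set Finset Metric intervalIntegral

/-- The function `J(η) = (1/π) ∫₀¹ x^((q-1)/2) / √((1-x) ∏ (x+ηᵢ)) dx`. -/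
noncomputable def J (q : ℕ) (η : Fin q → ℝ) : ℝ :=
  (1 / Real.pi) * ∫ x in Set.Ioo (0 : ℝ) 1,
    x ^ (((q : ℝ) - 1) / 2) / Real.sqrt ((1 - x) * ∏ i : Fin q, (x + η i))

/-- Auxiliary integrand family. -/
noncomputable def Wf (q : ℕ) (η : Fin q → ℝ) (s : Finset (Fin q)) (x : ℝ) : ℝ :=
  x ^ (((q : ℝ) - 1) / 2) / Real.sqrt ((1 - x) * ∏ l ∈ s, (x + η l))

section aux

variable {q : ℕ} {η : Fin q → ℝ}

lemma prod_eta_pos (hη : ∀ i, 0 < η i) {x : ℝ} (hx : 0 ≤ x) (s : Finset (Fin q)) :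
    0 < ∏ l ∈ s, (x + η l) :=
  Finset.prod_pos fun l _ => add_pos_of_nonneg_of_pos hx (hη l)

lemma Wf_nonneg (s : Finset (Fin q)) {x : ℝ} (hx : 0 < x) : 0 ≤ Wf q η s x :=
  div_nonneg (Real.rpow_nonneg hx.le _) (Real.sqrt_nonneg _)

lemma Wf_cont (hη : ∀ i, 0 < η i) (s : Finset (Fin q)) :
    ContinuousOn (Wf q η s) (Set.Ioo 0 1) := by
  apply ContinuousOn.div
  · exact fun x hx => (Real.continuousAt_rpow_const x _ (Or.inl hx.1.ne')).continuousWithinAt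
  · apply Continuous.continuousOn
    exact Real.continuous_sqrt.comp
      (((continuous_const.sub continuous_id).mul
        (continuous_finset_prod _ fun l _ => continuous_id.add continuous_const)))
  · intro x hx
    exact (Real.sqrt_pos.mpr (mul_pos (by linarith [hx.2]) (prod_eta_pos hη hx.1.le s))).ne'

lemma Wf_le (hη : ∀ i, 0 < η i) (hq : 1 ≤ q) (s : Finset (Fin q)) {x : ℝ}
    (hx : x ∈ Set.Ioo (0:ℝ) 1) :
    Wf q η s x ≤ (Real.sqrt (∏ l ∈ s, η l))⁻¹ * (1 - x) ^ (-(1:ℝ)/2) := by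
  obtain ⟨hx0, hx1⟩ := hx
  have h1x : (0:ℝ) ≤ 1 - x := by linarith
  have hP : 0 < ∏ l ∈ s, η l := Finset.prod_pos fun l _ => hη l
  have hle : ∏ l ∈ s, η l ≤ ∏ l ∈ s, (x + η l) :=
    Finset.prod_le_prod (fun l _ => (hη l).le) (fun l _ => by linarith)
  have hnum : x ^ (((q:ℝ)-1)/2) ≤ 1 := by
    apply Real.rpow_le_one hx0.le hx1.le
    have : (1:ℝ) ≤ (q:ℝ) := by exact_mod_cast hq
    linarith
  have hrw : (1 - x) ^ (-(1:ℝ)/2) = (Real.sqrt (1-x))⁻¹ := by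
    rw [show (-(1:ℝ)/2) = -(1/2 : ℝ) by norm_num, Real.rpow_neg h1x, ← Real.sqrt_eq_rpow]
  rw [hrw, ← mul_inv]
  have hd : Real.sqrt (∏ l ∈ s, η l) * Real.sqrt (1 - x)
      ≤ Real.sqrt ((1 - x) * ∏ l ∈ s, (x + η l)) := by
    rw [Real.sqrt_mul h1x, mul_comm (Real.sqrt (1-x))]
    exact mul_le_mul_of_nonneg_right (Real.sqrt_le_sqrt hle) (Real.sqrt_nonneg _)
  have hdpos : 0 < Real.sqrt (∏ l ∈ s, η l) * Real.sqrt (1 - x) := by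
    apply mul_pos (Real.sqrt_pos.mpr hP) (Real.sqrt_pos.mpr (by linarith))
  calc Wf q η s x ≤ 1 / Real.sqrt ((1 - x) * ∏ l ∈ s, (x + η l)) :=
        div_le_div₀ zero_le_one hnum (Real.sqrt_pos.mpr
          (mul_pos (by linarith) (prod_eta_pos hη hx0.le s))) le_rfl
    _ ≤ 1 / (Real.sqrt (∏ l ∈ s, η l) * Real.sqrt (1 - x)) :=
        one_div_le_one_div_of_le hdpos hd
    _ = (Real.sqrt (∏ l ∈ s, η l) * Real.sqrt (1 - x))⁻¹ := one_div _

lemma Wf_integrable (hη : ∀ i, 0 < η i) (hq : 1 ≤ q) (s : Finset (Fin q)) :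
    IntegrableOn (Wf q η s) (Set.Ioo 0 1) := by
  have hbase : IntegrableOn (fun x : ℝ => (1 - x) ^ (-(1:ℝ)/2)) (Set.Ioo 0 1) := by
    have h := (intervalIntegrable_rpow' (r := -(1:ℝ)/2) (by norm_num)
      (a := 0) (b := 1)).comp_sub_left 1
    simp only [sub_zero, sub_self] at h
    rw [intervalIntegrable_iff] at h
    have : Set.Ioo (0:ℝ) 1 ⊆ Set.uIoc (1:ℝ) 0 := by
      rw [Set.uIoc_of_ge zero_le_one]
      exact Set.Ioo_subset_Ioc_self
    exact h.mono_set this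
  refine Integrable.mono' (hbase.const_mul (Real.sqrt (∏ l ∈ s, η l))⁻¹)
    ((Wf_cont hη s).aestronglyMeasurable measurableSet_Ioo) ?_
  filter_upwards [ae_restrict_mem measurableSet_Ioo] with x hx
  rw [Real.norm_of_nonneg (Wf_nonneg s hx.1)]
  exact Wf_le hη hq s hx

lemma prod_update (k : Fin q) (t x : ℝ) :
    ∏ l, (x + Function.update η k t l)
      = (x + t) * ∏ l ∈ Finset.univ.erase k, (x + η l) := by
  rw [← Finset.mul_prod_erase Finset.univ (fun l => x + Function.update η k t l)
    (Finset.mem_univ k)]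
  simp only [Function.update_self]
  congr 1
  exact Finset.prod_congr rfl fun l hl => by
    rw [Function.update_of_ne (Finset.ne_of_mem_erase hl)]

lemma J_update_eq (hη : ∀ i, 0 < η i) (k : Fin q) {t : ℝ} (ht : 0 < t) :
    J q (Function.update η k t) = (1 / Real.pi) * ∫ x in Set.Ioo (0:ℝ) 1,
      Wf q η (Finset.univ.erase k) x * (Real.sqrt (x + t))⁻¹ := by
  unfold J
  congr 1
  apply setIntegral_congr_fun measurableSet_Ioo
  intro x hx
  have hxt : (0:ℝ) ≤ x + t := by linarith [hx.1]
  dsimp only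
  rw [prod_update, show (1 - x) * ((x + t) * ∏ l ∈ Finset.univ.erase k, (x + η l))
      = (x + t) * ((1 - x) * ∏ l ∈ Finset.univ.erase k, (x + η l)) by ring,
    Real.sqrt_mul hxt]
  unfold Wf
  rw [div_mul_eq_div_div_swap, div_eq_mul_inv _ (Real.sqrt (x+t))]

lemma hasDeriv_J (hη : ∀ i, 0 < η i) (hq : 1 ≤ q) (k : Fin q) :
    HasDerivAt (fun t => J q (Function.update η k t))
      ((1 / Real.pi) * ∫ x in Set.Ioo (0:ℝ) 1,
        -(Wf q η Finset.univ x / (2 * (x + η k)))) (η k) := by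
  set C := Wf q η (Finset.univ.erase k) with hC
  set F : ℝ → ℝ → ℝ := fun t x => C x * (Real.sqrt (x + t))⁻¹ with hF
  set F' : ℝ → ℝ → ℝ := fun t x =>
    C x * (-(1 / (2 * Real.sqrt (x + t)) * 1) / Real.sqrt (x + t) ^ 2) with hF'
  have hεpos : 0 < η k / 2 := half_pos (hη k)
  have hmem : ∀ t ∈ ball (η k) (η k / 2), η k / 2 < t := by
    intro t ht
    rw [mem_ball, Real.dist_eq, abs_lt] at ht
    linarith [ht.1]
  have hCcont := Wf_cont hη (Finset.univ.erase k)
  have hCint := Wf_integrable hη hq (Finset.univ.erase k)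
  have hcont : ∀ t : ℝ, 0 < t →
      ContinuousOn (fun x => (Real.sqrt (x + t))⁻¹) (Set.Ioo 0 1) := by
    intro t ht
    apply ContinuousOn.inv₀
    · exact (Real.continuous_sqrt.comp (continuous_id.add continuous_const)).continuousOn
    · intro x hx
      exact (Real.sqrt_pos.mpr (by linarith [hx.1])).ne'
  have key := _root_.hasDerivAt_integral_of_dominated_loc_of_deriv_le
    (μ := volume.restrict (Set.Ioo (0:ℝ) 1)) (F := F) (F' := F') (x₀ := η k)
    (bound := fun x => C x * (2 * Real.sqrt (η k / 2) ^ 3)⁻¹) (ball_mem_nhds (η k) hεpos)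
    ?_ ?_ ?_ ?_ ?_ ?_
  · have hd : HasDerivAt (fun t => (1 / Real.pi) * ∫ x in Set.Ioo (0:ℝ) 1, F t x)
        ((1 / Real.pi) * ∫ x in Set.Ioo (0:ℝ) 1, F' (η k) x) (η k) :=
      key.2.const_mul _
    have heq : (fun t => J q (Function.update η k t))
        =ᶠ[nhds (η k)] (fun t => (1 / Real.pi) * ∫ x in Set.Ioo (0:ℝ) 1, F t x) := by
      filter_upwards [eventually_gt_nhds (hη k)] with t ht
      exact J_update_eq hη k ht
    have hd2 := hd.congr_of_eventuallyEq heq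
    convert hd2 using 2
    rfl
    rfl
    apply setIntegral_congr_fun measurableSet_Ioo
    intro x hx
    have hxk : 0 < x + η k := by linarith [hx.1, hη k]
    have hs : (0:ℝ) < Real.sqrt (x + η k) := Real.sqrt_pos.mpr hxk
    have hsq : Real.sqrt (x + η k) ^ 2 = x + η k := Real.sq_sqrt hxk.le
    have hWrel : Wf q η Finset.univ x = C x / Real.sqrt (x + η k) := by
      rw [hC]
      unfold Wf
      have : ∏ l, (x + η l) = (x + η k) * ∏ l ∈ Finset.univ.erase k, (x + η l) := by
        have := prod_update (η := η) k (η k) x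
        rwa [Function.update_eq_self] at this
      rw [this, show (1 - x) * ((x + η k) * ∏ l ∈ Finset.univ.erase k, (x + η l))
          = (x + η k) * ((1 - x) * ∏ l ∈ Finset.univ.erase k, (x + η l)) by ring,
        Real.sqrt_mul hxk.le, div_div]
      ring
    show -(Wf q η Finset.univ x / (2 * (x + η k)))
      = C x * (-(1 / (2 * Real.sqrt (x + η k)) * 1) / Real.sqrt (x + η k) ^ 2)
    rw [hWrel, hsq]
    field_simp
    try ring
    try exact Or.inl trivial
  · -- hF_meas
    filter_upwards [eventually_gt_nhds (hη k)] with t ht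
    exact ((hCcont.mul (hcont t ht)).aestronglyMeasurable measurableSet_Ioo)
  · -- hF_int
    refine Integrable.mono' (hCint.mul_const (Real.sqrt (η k))⁻¹)
      ((hCcont.mul (hcont _ (hη k))).aestronglyMeasurable measurableSet_Ioo) ?_
    filter_upwards [ae_restrict_mem measurableSet_Ioo] with x hx
    have h1 : 0 < Real.sqrt (η k) := Real.sqrt_pos.mpr (hη k)
    have h2 : Real.sqrt (η k) ≤ Real.sqrt (x + η k) :=
      Real.sqrt_le_sqrt (by linarith [hx.1])
    rw [hF, Real.norm_of_nonneg (mul_nonneg (Wf_nonneg _ hx.1) (inv_nonneg.mpr (Real.sqrt_nonneg _)))]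
    exact mul_le_mul_of_nonneg_left (by
      exact inv_anti₀ h1 h2) (Wf_nonneg _ hx.1)
  · -- hF'_meas
    apply ContinuousOn.aestronglyMeasurable ?_ measurableSet_Ioo
    have hsc : Continuous fun x : ℝ => Real.sqrt (x + η k) :=
      Real.continuous_sqrt.comp (continuous_id.add continuous_const)
    have hsn : ∀ x ∈ Set.Ioo (0:ℝ) 1, Real.sqrt (x + η k) ≠ 0 :=
      fun x hx => (Real.sqrt_pos.mpr (by linarith [hx.1, hη k])).ne'
    have hnum : ContinuousOn (fun x : ℝ => -(1 / (2 * Real.sqrt (x + η k)) * 1))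
        (Set.Ioo 0 1) :=
      ((continuousOn_const.div (continuous_const.mul hsc).continuousOn
        (fun x hx => mul_ne_zero two_ne_zero (hsn x hx))).mul continuousOn_const).neg
    exact hCcont.mul (hnum.div (hsc.pow 2).continuousOn
      (fun x hx => pow_ne_zero _ (hsn x hx)))
  · -- h_bound
    filter_upwards [ae_restrict_mem measurableSet_Ioo] with x hx t ht
    have hxt : 0 < x + t := by linarith [hx.1, hmem t ht]
    have hs : 0 < Real.sqrt (x + t) := Real.sqrt_pos.mpr hxt
    have hs0 : 0 < Real.sqrt (η k / 2) := Real.sqrt_pos.mpr hεpos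
    have hss : Real.sqrt (η k / 2) ≤ Real.sqrt (x + t) :=
      Real.sqrt_le_sqrt (by linarith [hx.1, hmem t ht])
    rw [hF', Real.norm_eq_abs, abs_mul, abs_of_nonneg (Wf_nonneg _ hx.1), abs_div, abs_neg,
      abs_of_nonneg (by positivity : (0:ℝ) ≤ 1 / (2 * Real.sqrt (x + t)) * 1),
      abs_of_nonneg (by positivity : (0:ℝ) ≤ Real.sqrt (x + t) ^ 2)]
    apply mul_le_mul_of_nonneg_left ?_ (Wf_nonneg _ hx.1)
    rw [show 1 / (2 * Real.sqrt (x + t)) * 1 / Real.sqrt (x + t) ^ 2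
        = (2 * Real.sqrt (x + t) ^ 3)⁻¹ by
      rw [mul_one, div_div, one_div]; congr 1; ring]
    apply inv_anti₀ (by positivity)
    have : Real.sqrt (η k / 2) ^ 3 ≤ Real.sqrt (x + t) ^ 3 :=
      pow_le_pow_left₀ hs0.le hss 3
    linarith
  · -- bound integrable
    exact hCint.mul_const _
  · -- h_diff
    filter_upwards [ae_restrict_mem measurableSet_Ioo] with x hx t ht
    have hxt : 0 < x + t := by linarith [hx.1, hmem t ht]
    have h1 : HasDerivAt (fun t : ℝ => x + t) 1 t := by
      simpa using (hasDerivAt_id t).const_add x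
    have h2 : HasDerivAt (fun t : ℝ => Real.sqrt (x + t))
        (1 / (2 * Real.sqrt (x + t)) * 1) t :=
      (Real.hasDerivAt_sqrt hxt.ne').comp t h1
    have h3 := h2.inv (Real.sqrt_pos.mpr hxt).ne'
    exact h3.const_mul (C x)

end aux

theorem stmt2 (q : ℕ) (η : Fin q → ℝ) (hη : ∀ i, 0 < η i) (i j : Fin q) :
    (0 ≤ (η i - η j) *
      (deriv (fun t => J q (Function.update η i t)) (η i) -
        deriv (fun t => J q (Function.update η j t)) (η j))) ∧
    (∀ x : ℝ, 0 < x →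
      (η i - η j) *
          (deriv (fun a => (x + a) ^ (-(1 : ℝ) / 2) * (x + η j) ^ (-(1 : ℝ) / 2)) (η i) -
            deriv (fun b => (x + η i) ^ (-(1 : ℝ) / 2) * (x + b) ^ (-(1 : ℝ) / 2)) (η j)) =
        (η i - η j) ^ 2 / (2 * (x + η i) ^ ((3 : ℝ) / 2) * (x + η j) ^ ((3 : ℝ) / 2)) ∧
      0 ≤ (η i - η j) ^ 2 / (2 * (x + η i) ^ ((3 : ℝ) / 2) * (x + η j) ^ ((3 : ℝ) / 2))) := by
  have hq : 1 ≤ q := i.pos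
  constructor
  · -- Schur–Ostrowski condition
    have hWint := Wf_integrable hη hq (Finset.univ : Finset (Fin q))
    have hWcont := Wf_cont hη (Finset.univ : Finset (Fin q))
    have hAint : ∀ k : Fin q, IntegrableOn
        (fun x => -(Wf q η Finset.univ x / (2 * (x + η k)))) (Set.Ioo 0 1) := by
      intro k
      refine Integrable.mono' (hWint.mul_const (2 * η k)⁻¹) ?_ ?_
      · apply ContinuousOn.aestronglyMeasurable ?_ measurableSet_Ioo
        refine (hWcont.div
          ((continuous_const.mul (continuous_id.add continuous_const)).continuousOn) ?_).neg
        intro x hx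
        have : (0:ℝ) < 2 * (x + η k) := by have := hη k; have := hx.1; positivity
        exact this.ne'
      · filter_upwards [ae_restrict_mem measurableSet_Ioo] with x hx
        have hW0 : 0 ≤ Wf q η Finset.univ x := Wf_nonneg _ hx.1
        have hk := hη k
        have hx1 := hx.1
        rw [norm_neg, Real.norm_of_nonneg (div_nonneg hW0 (by linarith))]
        rw [div_eq_mul_inv]
        apply mul_le_mul_of_nonneg_left ?_ hW0
        apply inv_anti₀ (by positivity)
        linarith
    rw [(hasDeriv_J hη hq i).deriv, (hasDeriv_J hη hq j).deriv, ← mul_sub,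
      ← integral_sub (hAint i) (hAint j),
      show ∀ r I : ℝ, r * (1 / Real.pi * I) = 1 / Real.pi * (r * I) by intro r I; ring]
    apply mul_nonneg (by positivity)
    rw [← MeasureTheory.integral_const_mul]
    apply setIntegral_nonneg measurableSet_Ioo
    intro x hx
    have hW0 : 0 ≤ Wf q η Finset.univ x := Wf_nonneg _ hx.1
    have ha : 0 < x + η i := by have := hη i; have := hx.1; linarith
    have hb : 0 < x + η j := by have := hη j; have := hx.1; linarith
    have key : (η i - η j) * (-(Wf q η Finset.univ x / (2 * (x + η i)))
        - -(Wf q η Finset.univ x / (2 * (x + η j))))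
        = Wf q η Finset.univ x * (η i - η j) ^ 2 / (2 * (x + η i) * (x + η j)) := by
      field_simp
      ring
    rw [key]
    apply div_nonneg (mul_nonneg hW0 (sq_nonneg _))
    exact (mul_pos (mul_pos two_pos ha) hb).le
  · -- pointwise identity
    intro x hx
    have hXi : 0 < x + η i := by have := hη i; linarith
    have hXj : 0 < x + η j := by have := hη j; linarith
    have h1 : HasDerivAt (fun a : ℝ => (x + a) ^ (-(1:ℝ)/2))
        (1 * (-(1:ℝ)/2) * (x + η i) ^ (-(1:ℝ)/2 - 1)) (η i) :=
      HasDerivAt.rpow_const (by simpa using (hasDerivAt_id (η i)).const_add x)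
        (Or.inl hXi.ne')
    have h2 : HasDerivAt (fun b : ℝ => (x + b) ^ (-(1:ℝ)/2))
        (1 * (-(1:ℝ)/2) * (x + η j) ^ (-(1:ℝ)/2 - 1)) (η j) :=
      HasDerivAt.rpow_const (by simpa using (hasDerivAt_id (η j)).const_add x)
        (Or.inl hXj.ne')
    have hd1 := (h1.mul_const ((x + η j) ^ (-(1:ℝ)/2))).deriv
    have hd2 := (h2.const_mul ((x + η i) ^ (-(1:ℝ)/2))).deriv
    have hu : (0:ℝ) < (x + η i) ^ ((3:ℝ)/2) := Real.rpow_pos_of_pos hXi _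
    have hv : (0:ℝ) < (x + η j) ^ ((3:ℝ)/2) := Real.rpow_pos_of_pos hXj _
    refine ⟨?_, ?_⟩
    · rw [hd1, hd2]
      have e3i : (x + η i) ^ (-(1:ℝ)/2 - 1) = ((x + η i) ^ ((3:ℝ)/2))⁻¹ := by
        rw [show (-(1:ℝ)/2 - 1) = -((3:ℝ)/2) by norm_num, Real.rpow_neg hXi.le]
      have e3j : (x + η j) ^ (-(1:ℝ)/2 - 1) = ((x + η j) ^ ((3:ℝ)/2))⁻¹ := by
        rw [show (-(1:ℝ)/2 - 1) = -((3:ℝ)/2) by norm_num, Real.rpow_neg hXj.le]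
      have e1i : (x + η i) ^ (-(1:ℝ)/2) = (x + η i) * ((x + η i) ^ ((3:ℝ)/2))⁻¹ := by
        rw [show (-(1:ℝ)/2) = 1 + -((3:ℝ)/2) by norm_num, Real.rpow_add hXi,
          Real.rpow_one, Real.rpow_neg hXi.le]
      have e1j : (x + η j) ^ (-(1:ℝ)/2) = (x + η j) * ((x + η j) ^ ((3:ℝ)/2))⁻¹ := by
        rw [show (-(1:ℝ)/2) = 1 + -((3:ℝ)/2) by norm_num, Real.rpow_add hXj,
          Real.rpow_one, Real.rpow_neg hXj.le]
      rw [e3i, e3j, e1i, e1j]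
      field_simp
      ring
    · apply div_nonneg (sq_nonneg _)
      exact (mul_pos (mul_pos two_pos hu) hv).le
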